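/- arXiv:1409.5551 — 2 statements merged into one kernel-verified Lean document; each statement's English description precedes it below -/
import Mathlib

section
/- Let (a_k)_{k∈ℕ} and (b_k)_{k∈ℕ} be two real sequences in ℓ¹(ℕ) such that Σ_{k∈ℕ} a_k^p = Σ_{k∈ℕ} b_k^p for every integer p ≥ 1. Then for every nonzero real number x, the set {k : a_k = x} is finite, the set {k : b_k = x} is finite, and these two sets have the same cardinality; equivalently, there is a bijection between {k : a_k ≠ 0} and {k : b_k ≠ 0} under which corresponding terms are equal. -/
open Set Filter Finset

private lemma aux_finite {a : ℕ → ℝ} (ha : Summable fun k => |a k|) {r : ℝ} (hr : 0 < r) :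
    {k | r ≤ |a k|}.Finite := by
  have h := ha.tendsto_cofinite_zero.eventually_lt_const hr
  rw [Filter.eventually_cofinite] at h
  exact h.subset fun k hk => by simpa [not_lt] using hk


private lemma aux_summable_pow {a : ℕ → ℝ} (ha : Summable fun k => |a k|) {p : ℕ} (hp : 1 ≤ p) :
    Summable fun k => (a k) ^ p := by
  refine Summable.of_norm_bounded_eventually ha ?_
  have h1 : ∀ᶠ k in Filter.cofinite, |a k| < 1 :=
    ha.tendsto_cofinite_zero.eventually_lt_const (by norm_num)
  filter_upwards [h1] with k hk
  have : ‖(a k) ^ p‖ = |a k| ^ p := by rw [Real.norm_eq_abs, abs_pow]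
  rw [this]
  exact pow_le_of_le_one (abs_nonneg _) hk.le (by omega)

private lemma aux_decomp (c : ℕ → ℝ) (hc : Summable fun k => |c k|) {x : ℝ} (hx : x ≠ 0)
    (S : Finset ℕ) (hS : ∀ k, k ∈ S ↔ |x| ≤ |c k|)
    (m : ℝ) (hm0 : 0 ≤ m) (hm : ∀ k, |c k| < |x| → |c k| ≤ m) {p : ℕ} (hp : 1 ≤ p) :
    |∑' k, (c k) ^ p - ((∑ k ∈ S.filter (fun k => |x| < |c k|), (c k) ^ p)
      + ({k | c k = x}.ncard : ℝ) * x ^ p + ({k | c k = -x}.ncard : ℝ) * (-x) ^ p)|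
      ≤ m ^ (p - 1) * ∑' k, |c k| := by
  have hsum : Summable fun k => (c k) ^ p := aux_summable_pow hc hp
  -- split tsum
  have hsplit := Summable.sum_add_tsum_subtype_compl hsum S
  -- decompose finite sum over S
  have h1 := Finset.sum_filter_add_sum_filter_not S (fun k => |x| < |c k|) (fun k => (c k) ^ p)
  set T := S.filter (fun k => ¬ |x| < |c k|) with hT
  have hTmem : ∀ k, k ∈ T ↔ (c k = x ∨ c k = -x) := by
    intro k
    simp only [hT, Finset.mem_filter, hS k, not_lt]
    constructor
    · rintro ⟨h1', h2'⟩
      exact abs_eq_abs.mp (le_antisymm h2' h1')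
    · intro h
      have : |c k| = |x| := by rcases h with h | h <;> simp [h, abs_neg]
      exact ⟨this.ge, this.le⟩
  have h2 := Finset.sum_filter_add_sum_filter_not T (fun k => c k = x) (fun k => (c k) ^ p)
  have hfx : ∑ k ∈ T.filter (fun k => c k = x), (c k) ^ p = ({k | c k = x}.ncard : ℝ) * x ^ p := by
    have hset : {k | c k = x} = ↑(T.filter (fun k => c k = x)) := by
      ext k
      simp only [Set.mem_setOf_eq, Finset.mem_coe, Finset.mem_filter, hTmem k]
      tauto
    rw [hset, Set.ncard_coe_finset]
    rw [Finset.sum_congr rfl (fun k hk => by rw [(Finset.mem_filter.mp hk).2])]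
    rw [Finset.sum_const, nsmul_eq_mul]
  have hfnx : ∑ k ∈ T.filter (fun k => ¬ c k = x), (c k) ^ p
      = ({k | c k = -x}.ncard : ℝ) * (-x) ^ p := by
    have hset : {k | c k = -x} = ↑(T.filter (fun k => ¬ c k = x)) := by
      ext k
      simp only [Set.mem_setOf_eq, Finset.mem_coe, Finset.mem_filter, hTmem k]
      constructor
      · intro h
        refine ⟨Or.inr h, ?_⟩
        intro hexy
        rw [hexy] at h
        exact hx (by linarith)
      · rintro ⟨h1' | h1', h2'⟩
        · exact absurd h1' h2'
        · exact h1'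
    rw [hset, Set.ncard_coe_finset]
    rw [Finset.sum_congr rfl (fun k hk => ?_), Finset.sum_const, nsmul_eq_mul]
    rcases (hTmem k).mp (Finset.mem_filter.mp hk).1 with h | h
    · exact absurd h (Finset.mem_filter.mp hk).2
    · rw [h]
  -- tail bound
  have htail : |∑' (k : {k // k ∉ S}), (c k : ℝ) ^ p| ≤ m ^ (p - 1) * ∑' k, |c k| := by
    have habs : Summable fun k => |(c k) ^ p| := hsum.abs
    have habs' : Summable fun k : {k // k ∉ S} => ‖(c (k : ℕ)) ^ p‖ := by
      have := habs.subtype {k | k ∉ S}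
      simp only [Real.norm_eq_abs, abs_pow] at this ⊢; exact this
    have hb1 : |∑' (k : {k // k ∉ S}), (c (k : ℕ)) ^ p| ≤ ∑' (k : {k // k ∉ S}), |(c (k : ℕ)) ^ p| := by
      simpa [Real.norm_eq_abs] using
        norm_tsum_le_tsum_norm (f := fun k : {k // k ∉ S} => (c (k : ℕ)) ^ p) habs'
    refine hb1.trans ?_
    have hb2 : ∀ (k : {k // k ∉ S}), |(c (k : ℕ)) ^ p| ≤ m ^ (p - 1) * |c (k : ℕ)| := by
      rintro ⟨k, hk⟩
      have hlt : |c k| < |x| := by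
        by_contra h
        exact hk ((hS k).mpr (not_lt.mp h))
      have hle : |c k| ≤ m := hm k hlt
      calc |(c k) ^ p| = |c k| ^ (p - 1) * |c k| := by
            rw [abs_pow, ← pow_succ, Nat.sub_add_cancel hp]
        _ ≤ m ^ (p - 1) * |c k| :=
            mul_le_mul_of_nonneg_right (pow_le_pow_left₀ (abs_nonneg _) hle _) (abs_nonneg _)
    refine (Summable.tsum_le_tsum hb2 (habs.subtype _) ((hc.subtype _).mul_left _)).trans ?_
    rw [tsum_mul_left]
    exact mul_le_mul_of_nonneg_left
      (Summable.tsum_subtype_le (fun k => |c k|) _ (fun _ => abs_nonneg _) hc)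
      (pow_nonneg hm0 _)
  have : ∑' k, (c k) ^ p - ((∑ k ∈ S.filter (fun k => |x| < |c k|), (c k) ^ p)
      + ({k | c k = x}.ncard : ℝ) * x ^ p + ({k | c k = -x}.ncard : ℝ) * (-x) ^ p)
      = ∑' (k : {k // k ∉ S}), (c (k : ℕ)) ^ p := by
    rw [← hfx, ← hfnx]
    rw [← hsplit, ← h1, ← h2]
    ring
  rw [this]
  exact htail

private lemma aux_inner (c : ℕ → ℝ) (p : ℕ) (y : ℝ) (S1 : Finset ℕ)
    (h : ∀ k, k ∈ S1 ↔ c k = y) :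
    ∑ k ∈ S1, (c k) ^ p = ({k | c k = y}.ncard : ℝ) * y ^ p := by
  have hset : {k | c k = y} = ↑S1 := by ext k; simp [h k]
  rw [hset, Set.ncard_coe_finset,
    Finset.sum_congr rfl (fun k hk => by rw [(h k).mp hk]), Finset.sum_const, nsmul_eq_mul]

private lemma aux_bigsum (a b : ℕ → ℝ) {r : ℝ}
    (SA SB : Finset ℕ) (hSA : ∀ k, k ∈ SA ↔ r ≤ |a k|) (hSB : ∀ k, k ∈ SB ↔ r ≤ |b k|)
    (Hbig : ∀ y : ℝ, r < |y| → {k | a k = y}.ncard = {k | b k = y}.ncard) (p : ℕ) :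
    ∑ k ∈ SA.filter (fun k => r < |a k|), (a k) ^ p
      = ∑ k ∈ SB.filter (fun k => r < |b k|), (b k) ^ p := by
  set A1 := SA.filter (fun k => r < |a k|) with hA1
  set B1 := SB.filter (fun k => r < |b k|) with hB1
  set V := A1.image a ∪ B1.image b with hV
  have hVy : ∀ y ∈ V, r < |y| := by
    intro y hy
    rcases Finset.mem_union.mp hy with h | h <;> obtain ⟨k, hk, rfl⟩ := Finset.mem_image.mp h
    · exact (Finset.mem_filter.mp hk).2
    · exact (Finset.mem_filter.mp hk).2
  have hmemA : ∀ y ∈ V, ∀ k, k ∈ A1.filter (fun k => a k = y) ↔ a k = y := by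
    intro y hy k
    constructor
    · intro hk; exact (Finset.mem_filter.mp hk).2
    · intro h
      have hry : r < |a k| := by rw [h]; exact hVy y hy
      exact Finset.mem_filter.mpr ⟨Finset.mem_filter.mpr ⟨(hSA k).mpr hry.le, hry⟩, h⟩
  have hmemB : ∀ y ∈ V, ∀ k, k ∈ B1.filter (fun k => b k = y) ↔ b k = y := by
    intro y hy k
    constructor
    · intro hk; exact (Finset.mem_filter.mp hk).2
    · intro h
      have hry : r < |b k| := by rw [h]; exact hVy y hy
      exact Finset.mem_filter.mpr ⟨Finset.mem_filter.mpr ⟨(hSB k).mpr hry.le, hry⟩, h⟩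
  have hgA : ∑ k ∈ A1, (a k) ^ p = ∑ y ∈ V, ({k | a k = y}.ncard : ℝ) * y ^ p := by
    rw [← Finset.sum_fiberwise_of_maps_to (g := a) (t := V)
      (fun k hk => Finset.mem_union_left _ (Finset.mem_image_of_mem a hk)) (fun k => (a k) ^ p)]
    exact Finset.sum_congr rfl fun y hy => aux_inner a p y _ (hmemA y hy)
  have hgB : ∑ k ∈ B1, (b k) ^ p = ∑ y ∈ V, ({k | b k = y}.ncard : ℝ) * y ^ p := by
    rw [← Finset.sum_fiberwise_of_maps_to (g := b) (t := V)
      (fun k hk => Finset.mem_union_right _ (Finset.mem_image_of_mem b hk)) (fun k => (b k) ^ p)]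
    exact Finset.sum_congr rfl fun y hy => aux_inner b p y _ (hmemB y hy)
  rw [hgA, hgB]
  exact Finset.sum_congr rfl fun y hy => by rw [Hbig y (hVy y hy)]

private lemma aux_step (a b : ℕ → ℝ)
    (ha : Summable fun k => |a k|) (hb : Summable fun k => |b k|)
    (hpow : ∀ p : ℕ, 1 ≤ p → ∑' k, (a k) ^ p = ∑' k, (b k) ^ p)
    (x : ℝ) (hx : x ≠ 0)
    (Hbig : ∀ y : ℝ, |x| < |y| → {k | a k = y}.ncard = {k | b k = y}.ncard) :
    {k | a k = x}.ncard = {k | b k = x}.ncard := by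
  set r := |x| with hrdef
  have hr : 0 < r := abs_pos.mpr hx
  have finA := aux_finite ha hr
  have finB := aux_finite hb hr
  set SA := finA.toFinset with hSAdef
  set SB := finB.toFinset with hSBdef
  have hSA : ∀ k, k ∈ SA ↔ r ≤ |a k| := fun k => finA.mem_toFinset
  have hSB : ∀ k, k ∈ SB ↔ r ≤ |b k| := fun k => finB.mem_toFinset
  -- choose m
  have finA2 := aux_finite ha (half_pos hr)
  have finB2 := aux_finite hb (half_pos hr)
  set G : Finset ℝ := insert (r/2)
      (((finA2.toFinset.filter fun k => |a k| < r).image fun k => |a k|)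
        ∪ ((finB2.toFinset.filter fun k => |b k| < r).image fun k => |b k|)) with hG
  have hGne : G.Nonempty := ⟨r/2, Finset.mem_insert_self _ _⟩
  set m := G.max' hGne with hmdef
  have hmlt : m < r := by
    rw [Finset.max'_lt_iff]
    intro y hy
    rcases Finset.mem_insert.mp hy with h | h
    · rw [h]; linarith
    · rcases Finset.mem_union.mp h with h' | h' <;> obtain ⟨k, hk, rfl⟩ := Finset.mem_image.mp h'
      · exact (Finset.mem_filter.mp hk).2
      · exact (Finset.mem_filter.mp hk).2
  have hm2 : r/2 ≤ m := Finset.le_max' G _ (Finset.mem_insert_self _ _)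
  have hm0 : 0 ≤ m := by linarith
  have hma : ∀ k, |a k| < r → |a k| ≤ m := by
    intro k hk
    by_cases h2 : r/2 ≤ |a k|
    · exact Finset.le_max' G _ (Finset.mem_insert_of_mem (Finset.mem_union_left _
        (Finset.mem_image_of_mem _ (Finset.mem_filter.mpr ⟨finA2.mem_toFinset.mpr h2, hk⟩))))
    · linarith
  have hmb : ∀ k, |b k| < r → |b k| ≤ m := by
    intro k hk
    by_cases h2 : r/2 ≤ |b k|
    · exact Finset.le_max' G _ (Finset.mem_insert_of_mem (Finset.mem_union_right _
        (Finset.mem_image_of_mem _ (Finset.mem_filter.mpr ⟨finB2.mem_toFinset.mpr h2, hk⟩))))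
    · linarith
  set La := ∑' k, |a k| with hLa
  set Lb := ∑' k, |b k| with hLb
  have hLa0 : 0 ≤ La := tsum_nonneg fun k => abs_nonneg _
  have hLb0 : 0 ≤ Lb := tsum_nonneg fun k => abs_nonneg _
  set d := ({k | a k = x}.ncard : ℝ) - ({k | b k = x}.ncard : ℝ) with hd
  set e := ({k | a k = -x}.ncard : ℝ) - ({k | b k = -x}.ncard : ℝ) with he
  have key : ∀ p : ℕ, 1 ≤ p → |d * x ^ p + e * (-x) ^ p| ≤ m ^ (p - 1) * (La + Lb) := by
    intro p hp
    have Da := aux_decomp a ha hx SA hSA m hm0 hma hp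
    have Db := aux_decomp b hb hx SB hSB m hm0 hmb hp
    have hbig := aux_bigsum a b SA SB hSA hSB Hbig p
    have hp' := hpow p hp
    have heq : d * x ^ p + e * (-x) ^ p =
        (∑' k, (b k) ^ p - ((∑ k ∈ SB.filter (fun k => r < |b k|), (b k) ^ p)
          + ({k | b k = x}.ncard : ℝ) * x ^ p + ({k | b k = -x}.ncard : ℝ) * (-x) ^ p))
        - (∑' k, (a k) ^ p - ((∑ k ∈ SA.filter (fun k => r < |a k|), (a k) ^ p)
          + ({k | a k = x}.ncard : ℝ) * x ^ p + ({k | a k = -x}.ncard : ℝ) * (-x) ^ p)) := by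
      rw [hp', hbig, hd, he]; ring
    rw [heq]
    calc _ ≤ |∑' k, (b k) ^ p - ((∑ k ∈ SB.filter (fun k => r < |b k|), (b k) ^ p)
          + ({k | b k = x}.ncard : ℝ) * x ^ p + ({k | b k = -x}.ncard : ℝ) * (-x) ^ p)|
          + |∑' k, (a k) ^ p - ((∑ k ∈ SA.filter (fun k => r < |a k|), (a k) ^ p)
          + ({k | a k = x}.ncard : ℝ) * x ^ p + ({k | a k = -x}.ncard : ℝ) * (-x) ^ p)| :=
        abs_sub _ _
      _ ≤ m ^ (p - 1) * Lb + m ^ (p - 1) * La := add_le_add Db Da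
      _ = m ^ (p - 1) * (La + Lb) := by ring
  set q := m / r with hq
  have hq0 : 0 ≤ q := div_nonneg hm0 hr.le
  have hq1 : q < 1 := (div_lt_one hr).mpr hmlt
  set C := (La + Lb) / r with hC
  have hC0 : 0 ≤ C := div_nonneg (by linarith) hr.le
  have hqC : ∀ p : ℕ, 1 ≤ p → m ^ (p - 1) * (La + Lb) = q ^ (p - 1) * C * r ^ p := by
    intro p hp
    rw [hq, hC, div_pow]
    have : r ^ p = r ^ (p - 1) * r := by rw [← pow_succ, Nat.sub_add_cancel hp]
    rw [this]
    field_simp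
  have hde1 : d + e = 0 := by
    have hle : ∀ n : ℕ, 1 ≤ n → |d + e| ≤ q ^ n * C := by
      intro n hn
      have hkey := key (2 * n) (by omega)
      have hx2 : x ^ (2 * n) = r ^ (2 * n) := (Even.pow_abs ⟨n, by ring⟩ x).symm
      have hx2' : (-x) ^ (2 * n) = r ^ (2 * n) := by
        rw [Even.neg_pow ⟨n, by ring⟩, hx2]
      rw [hx2, hx2', hqC (2 * n) (by omega), ← add_mul, abs_mul,
        abs_of_nonneg (pow_nonneg hr.le _)] at hkey
      have hrp : 0 < r ^ (2 * n) := pow_pos hr _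
      have h1 : |d + e| ≤ q ^ (2 * n - 1) * C := le_of_mul_le_mul_right (by linarith [hkey]) hrp
      refine h1.trans ?_
      exact mul_le_mul_of_nonneg_right
        (pow_le_pow_of_le_one hq0 hq1.le (by omega)) hC0
    have ht : Tendsto (fun n : ℕ => q ^ n * C) atTop (nhds 0) := by
      simpa using (tendsto_pow_atTop_nhds_zero_of_lt_one hq0 hq1).mul_const C
    have h0 : |d + e| ≤ 0 := ge_of_tendsto ht (eventually_atTop.mpr ⟨1, fun n hn => hle n hn⟩)
    have := abs_nonneg (d + e)
    have : |d + e| = 0 := le_antisymm h0 this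
    exact abs_eq_zero.mp this
  have hde2 : d - e = 0 := by
    have hle : ∀ n : ℕ, 1 ≤ n → |d - e| ≤ q ^ n * C := by
      intro n hn
      have hkey := key (2 * n + 1) (by omega)
      have hodd : Odd (2 * n + 1) := ⟨n, by ring⟩
      have hx2' : (-x) ^ (2 * n + 1) = -(x ^ (2 * n + 1)) := Odd.neg_pow hodd x
      rw [hx2'] at hkey
      have heq2 : d * x ^ (2 * n + 1) + e * -(x ^ (2 * n + 1)) = (d - e) * x ^ (2 * n + 1) := by
        ring
      rw [heq2, abs_mul, abs_pow, ← hrdef, hqC (2 * n + 1) (by omega)] at hkey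
      have hrp : 0 < r ^ (2 * n + 1) := pow_pos hr _
      have h1 : |d - e| ≤ q ^ (2 * n + 1 - 1) * C := le_of_mul_le_mul_right (by linarith [hkey]) hrp
      refine h1.trans ?_
      exact mul_le_mul_of_nonneg_right
        (pow_le_pow_of_le_one hq0 hq1.le (by omega)) hC0
    have ht : Tendsto (fun n : ℕ => q ^ n * C) atTop (nhds 0) := by
      simpa using (tendsto_pow_atTop_nhds_zero_of_lt_one hq0 hq1).mul_const C
    have h0 : |d - e| ≤ 0 := ge_of_tendsto ht (eventually_atTop.mpr ⟨1, fun n hn => hle n hn⟩)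
    have := abs_nonneg (d - e)
    have : |d - e| = 0 := le_antisymm h0 this
    exact abs_eq_zero.mp this
  have hd0 : d = 0 := by linarith
  have : ({k | a k = x}.ncard : ℝ) = ({k | b k = x}.ncard : ℝ) := by
    rw [hd] at hd0; linarith
  exact_mod_cast this

private lemma aux_count (a b : ℕ → ℝ)
    (ha : Summable fun k => |a k|) (hb : Summable fun k => |b k|)
    (hpow : ∀ p : ℕ, 1 ≤ p → ∑' k, (a k) ^ p = ∑' k, (b k) ^ p) :
    ∀ x : ℝ, x ≠ 0 → {k | a k = x}.ncard = {k | b k = x}.ncard := by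
  suffices H : ∀ n : ℕ, ∀ x : ℝ, x ≠ 0 →
      {k | |x| ≤ |a k|}.ncard + {k | |x| ≤ |b k|}.ncard ≤ n →
      {k | a k = x}.ncard = {k | b k = x}.ncard by
    exact fun x hx => H _ x hx le_rfl
  intro n
  induction n using Nat.strong_induction_on with
  | _ n IH =>
    intro x hx hμ
    have hr : 0 < |x| := abs_pos.mpr hx
    by_cases hA : {k | a k = x} = ∅ ∧ {k | b k = x} = ∅
    · rw [hA.1, hA.2]
    · apply aux_step a b ha hb hpow x hx
      intro y hy
      have hy0 : y ≠ 0 := by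
        intro h; rw [h] at hy; simp at hy; linarith
      -- find witness k0
      have hwit : ∃ k0, a k0 = x ∨ b k0 = x := by
        by_contra hcon
        push_neg at hcon
        exact hA ⟨Set.eq_empty_iff_forall_notMem.mpr fun k hk => (hcon k).1 hk,
          Set.eq_empty_iff_forall_notMem.mpr fun k hk => (hcon k).2 hk⟩
      obtain ⟨k0, hk0⟩ := hwit
      have hsubA : {k | |y| ≤ |a k|} ⊆ {k | |x| ≤ |a k|} :=
        fun k hk => le_trans hy.le hk
      have hsubB : {k | |y| ≤ |b k|} ⊆ {k | |x| ≤ |b k|} :=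
        fun k hk => le_trans hy.le hk
      have finAx : {k | |x| ≤ |a k|}.Finite := aux_finite ha hr
      have finBx : {k | |x| ≤ |b k|}.Finite := aux_finite hb hr
      have hlt : {k | |y| ≤ |a k|}.ncard + {k | |y| ≤ |b k|}.ncard < n := by
        have hlt' : {k | |y| ≤ |a k|}.ncard + {k | |y| ≤ |b k|}.ncard
            < {k | |x| ≤ |a k|}.ncard + {k | |x| ≤ |b k|}.ncard := by
          rcases hk0 with hk0 | hk0
          · have hmem : k0 ∈ {k | |x| ≤ |a k|} := by simp [Set.mem_setOf_eq, hk0]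
            have hnmem : k0 ∉ {k | |y| ≤ |a k|} := by
              simp only [Set.mem_setOf_eq, hk0, not_le]; exact hy
            have h1 : {k | |y| ≤ |a k|}.ncard < {k | |x| ≤ |a k|}.ncard :=
              Set.ncard_lt_ncard ((Set.ssubset_iff_of_subset hsubA).mpr ⟨k0, hmem, hnmem⟩) finAx
            have h2 : {k | |y| ≤ |b k|}.ncard ≤ {k | |x| ≤ |b k|}.ncard :=
              Set.ncard_le_ncard hsubB finBx
            omega
          · have hmem : k0 ∈ {k | |x| ≤ |b k|} := by simp [Set.mem_setOf_eq, hk0]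
            have hnmem : k0 ∉ {k | |y| ≤ |b k|} := by
              simp only [Set.mem_setOf_eq, hk0, not_le]; exact hy
            have h1 : {k | |y| ≤ |b k|}.ncard < {k | |x| ≤ |b k|}.ncard :=
              Set.ncard_lt_ncard ((Set.ssubset_iff_of_subset hsubB).mpr ⟨k0, hmem, hnmem⟩) finBx
            have h2 : {k | |y| ≤ |a k|}.ncard ≤ {k | |x| ≤ |a k|}.ncard :=
              Set.ncard_le_ncard hsubA finAx
            omega
        omega
      exact IH _ hlt y hy0 le_rfl

/-- Two ℓ¹ sequences with equal power sums for all p ≥ 1 have, for each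
nonzero value x, finitely many terms equal to x, in equal number; equivalently their
nonzero terms are in value-preserving bijection. -/
theorem stmt_0 (a b : ℕ → ℝ)
    (ha : Summable fun k => |a k|) (hb : Summable fun k => |b k|)
    (hpow : ∀ p : ℕ, 1 ≤ p → ∑' k, (a k) ^ p = ∑' k, (b k) ^ p) :
    (∀ x : ℝ, x ≠ 0 →
      {k | a k = x}.Finite ∧ {k | b k = x}.Finite ∧
        {k | a k = x}.ncard = {k | b k = x}.ncard) ∧
    ∃ e : {k | a k ≠ 0} ≃ {k | b k ≠ 0}, ∀ k : {k | a k ≠ 0}, a k.1 = b (e k).1 := by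
  have hfinA : ∀ x : ℝ, x ≠ 0 → {k | a k = x}.Finite := by
    intro x hx
    exact (aux_finite ha (abs_pos.mpr hx)).subset fun k hk => by
      simp only [Set.mem_setOf_eq] at hk ⊢; rw [hk]
  have hfinB : ∀ x : ℝ, x ≠ 0 → {k | b k = x}.Finite := by
    intro x hx
    exact (aux_finite hb (abs_pos.mpr hx)).subset fun k hk => by
      simp only [Set.mem_setOf_eq] at hk ⊢; rw [hk]
  have hcount := aux_count a b ha hb hpow
  refine ⟨fun x hx => ⟨hfinA x hx, hfinB x hx, hcount x hx⟩, ?_⟩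
  have key : ∀ y : ℝ,
      Nonempty ({k : {k | a k ≠ 0} // a k.1 = y} ≃ {k : {k | b k ≠ 0} // b k.1 = y}) := by
    intro y
    by_cases hy : y = 0
    · subst hy
      have h1 : IsEmpty {k : {k | a k ≠ 0} // a k.1 = 0} := ⟨fun q => q.1.2 q.2⟩
      have h2 : IsEmpty {k : {k | b k ≠ 0} // b k.1 = 0} := ⟨fun q => q.1.2 q.2⟩
      exact ⟨Equiv.equivOfIsEmpty _ _⟩
    · have e1 : {k : {k | a k ≠ 0} // a k.1 = y} ≃ {k | a k = y} :=
        { toFun := fun q => ⟨q.1.1, q.2⟩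
          invFun := fun k => ⟨⟨k.1, by
            have := k.2
            simp only [Set.mem_setOf_eq] at this ⊢
            rw [this]; exact hy⟩, k.2⟩
          left_inv := fun q => rfl
          right_inv := fun k => rfl }
      have e2 : {k : {k | b k ≠ 0} // b k.1 = y} ≃ {k | b k = y} :=
        { toFun := fun q => ⟨q.1.1, q.2⟩
          invFun := fun k => ⟨⟨k.1, by
            have := k.2
            simp only [Set.mem_setOf_eq] at this ⊢
            rw [this]; exact hy⟩, k.2⟩
          left_inv := fun q => rfl
          right_inv := fun k => rfl }
      have hfa := hfinA y hy
      have hfb := hfinB y hy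
      have : Nat.card {k | a k = y} = Nat.card {k | b k = y} := by
        rw [Nat.card_coe_set_eq, Nat.card_coe_set_eq]
        exact hcount y hy
      have : Nonempty ({k | a k = y} ≃ {k | b k = y}) := by
        have := hfa.to_subtype
        have := hfb.to_subtype
        exact Finite.card_eq.mp ‹Nat.card {k | a k = y} = Nat.card {k | b k = y}›
      obtain ⟨e0⟩ := this
      exact ⟨e1.trans (e0.trans e2.symm)⟩
  refine ⟨Equiv.ofFiberEquiv (f := fun k : {k | a k ≠ 0} => a k.1)
      (g := fun k : {k | b k ≠ 0} => b k.1) (fun y => Classical.choice (key y)), fun k => ?_⟩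
  exact (Equiv.ofFiberEquiv_map (fun y => Classical.choice (key y)) k).symm
end

section
/- Let X be a real random variable whose moment generating function t ↦ E[e^{tX}] is finite in a neighborhood of 0, and let κ_j(X) denote the j-th derivative at 0 of t ↦ log E[e^{tX}]. Then for every integer m ≥ 0: E[X^{m+1}] = Σ_{i=0}^m binom(m,i) κ_{i+1}(X) E[X^{m−i}]. -/
open MeasureTheory ProbabilityTheory Filter Topology

private lemma itdw_isOpen {f : ℝ → ℝ} {s : Set ℝ} (hs : IsOpen s) {x : ℝ} (hx : x ∈ s) (n : ℕ) :
    iteratedDerivWithin n f s x = iteratedDeriv n f x := by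
  simp only [iteratedDerivWithin, iteratedDeriv, iteratedFDerivWithin_of_isOpen n hs hx]

private lemma exp_le_exp_add_exp {a b u x : ℝ} (h1 : a ≤ u) (h2 : u ≤ b) :
    Real.exp (u * x) ≤ Real.exp (b * x) + Real.exp (a * x) := by
  rcases le_or_gt 0 x with hx | hx
  · exact le_add_of_le_of_nonneg (Real.exp_le_exp.2 (mul_le_mul_of_nonneg_right h2 hx))
      (Real.exp_pos _).le
  · exact le_add_of_nonneg_of_le (Real.exp_pos _).le
      (Real.exp_le_exp.2 (mul_le_mul_of_nonpos_right h1 hx.le))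

private lemma choose_sum_aux (n : ℕ) (F G : ℕ → ℝ) :
    ∑ i ∈ Finset.range (n + 1), (n.choose i : ℝ) * F (i + 1) * G (n - i)
      + ∑ i ∈ Finset.range (n + 1), (n.choose i : ℝ) * F i * G (n - i + 1)
    = ∑ i ∈ Finset.range (n + 2), ((n + 1).choose i : ℝ) * F i * G (n + 1 - i) := by
  rw [Finset.sum_range_succ' (fun i => (((n + 1).choose i : ℕ) : ℝ) * F i * G (n + 1 - i)) (n + 1)]
  have h1 : ∀ i ∈ Finset.range (n + 1),
      (((n + 1).choose (i + 1) : ℕ) : ℝ) * F (i + 1) * G (n + 1 - (i + 1))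
        = (n.choose i : ℝ) * F (i + 1) * G (n - i)
          + (n.choose (i + 1) : ℝ) * F (i + 1) * G (n - i) := by
    intro i _
    rw [Nat.choose_succ_succ, Nat.succ_sub_succ]
    push_cast
    ring
  rw [Finset.sum_congr rfl h1, Finset.sum_add_distrib, add_assoc]
  congr 1
  rw [Finset.sum_range_succ' (fun i => (n.choose i : ℝ) * F i * G (n - i + 1)) n,
    Finset.sum_range_succ (fun i => (n.choose (i + 1) : ℝ) * F (i + 1) * G (n - i)) n]
  have h2 : ∀ i ∈ Finset.range n,
      (n.choose (i + 1) : ℝ) * F (i + 1) * G (n - (i + 1) + 1)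
        = (n.choose (i + 1) : ℝ) * F (i + 1) * G (n - i) := by
    intro i hi
    rw [Finset.mem_range] at hi
    congr 2
    omega
  rw [Finset.sum_congr rfl h2]
  simp [Nat.choose_succ_self]

private lemma leibniz_iteratedDeriv {s : Set ℝ} (hs : IsOpen s) :
    ∀ (n : ℕ) (f g : ℝ → ℝ), ContDiffOn ℝ ((⊤ : ℕ∞) : WithTop ℕ∞) f s → ContDiffOn ℝ ((⊤ : ℕ∞) : WithTop ℕ∞) g s → ∀ x ∈ s,
      iteratedDeriv n (fun t => f t * g t) x =
        ∑ i ∈ Finset.range (n + 1),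
          (n.choose i : ℝ) * iteratedDeriv i f x * iteratedDeriv (n - i) g x := by
  intro n
  induction n with
  | zero => intro f g _ _ x _; simp
  | succ n IH =>
    intro f g hf hg x hx
    have hf' : ContDiffOn ℝ ((⊤ : ℕ∞) : WithTop ℕ∞) (deriv f) s := hf.deriv_of_isOpen hs (by norm_num)
    have hg' : ContDiffOn ℝ ((⊤ : ℕ∞) : WithTop ℕ∞) (deriv g) s := hg.deriv_of_isOpen hs (by norm_num)
    have hdmul : Set.EqOn (deriv (fun t => f t * g t))
        (fun t => deriv f t * g t + f t * deriv g t) s := fun y hy =>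
      deriv_mul ((hf.differentiableOn (by norm_num)).differentiableAt (hs.mem_nhds hy))
        ((hg.differentiableOn (by norm_num)).differentiableAt (hs.mem_nhds hy))
    have hev : deriv (fun t => f t * g t) =ᶠ[𝓝 x]
        fun t => deriv f t * g t + f t * deriv g t :=
      eventually_of_mem (hs.mem_nhds hx) hdmul
    rw [iteratedDeriv_succ', hev.iteratedDeriv_eq n]
    have hadd : iteratedDeriv n (fun t => deriv f t * g t + f t * deriv g t) x
        = iteratedDeriv n (fun t => deriv f t * g t) x
          + iteratedDeriv n (fun t => f t * deriv g t) x := by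
      rw [← itdw_isOpen hs hx, ← itdw_isOpen hs hx, ← itdw_isOpen hs hx]
      exact iteratedDerivWithin_add hx hs.uniqueDiffOn
        (((hf'.mul hg).contDiffWithinAt hx).of_le (by exact_mod_cast le_top)) (((hf.mul hg').contDiffWithinAt hx).of_le (by exact_mod_cast le_top))
    rw [hadd, IH _ _ hf' hg x hx, IH _ _ hf hg' x hx]
    simp only [← iteratedDeriv_succ']
    exact choose_sum_aux n (fun i => iteratedDeriv i f x) (fun j => iteratedDeriv j g x)

theorem stmt_14 {Ω : Type*} [MeasurableSpace Ω] (P : Measure Ω) [IsProbabilityMeasure P]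
    (X : Ω → ℝ) (hX : Measurable X)
    (hmgf : ∃ ε > (0 : ℝ), ∀ t : ℝ, |t| < ε → Integrable (fun ω => Real.exp (t * X ω)) P)
    (κ : ℕ → ℝ)
    (hκ : ∀ j : ℕ, κ j =
      iteratedDeriv j (fun t : ℝ => Real.log (∫ ω, Real.exp (t * X ω) ∂P)) 0) :
    ∀ m : ℕ, ∫ ω, X ω ^ (m + 1) ∂P =
      ∑ i ∈ Finset.range (m + 1), (m.choose i : ℝ) * κ (i + 1) * ∫ ω, X ω ^ (m - i) ∂P := by
  obtain ⟨ε, hε, hInt⟩ := hmgf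
  set K : ℝ → ℝ := fun t : ℝ => Real.log (∫ ω, Real.exp (t * X ω) ∂P) with hKdef
  set Mn : ℕ → ℝ → ℝ := fun n t => ∫ ω, X ω ^ n * Real.exp (t * X ω) ∂P with hMndef
  have hmeas : ∀ (n : ℕ) (t : ℝ),
      AEStronglyMeasurable (fun ω => X ω ^ n * Real.exp (t * X ω)) P :=
    fun n t => ((hX.pow_const n).mul ((hX.const_mul t).exp)).aestronglyMeasurable
  -- Step A : integrability of all moments against the exponential
  have key_int : ∀ (n : ℕ) (t : ℝ), |t| < ε / 2 →
      Integrable (fun ω => X ω ^ n * Real.exp (t * X ω)) P := by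
    intro n t ht
    have habs := abs_lt.mp ht
    have h1 : Integrable (fun ω => Real.exp ((t + ε / 4) * X ω)) P :=
      hInt _ (by rw [abs_lt]; constructor <;> linarith)
    have h2 : Integrable (fun ω => Real.exp ((t - ε / 4) * X ω)) P :=
      hInt _ (by rw [abs_lt]; constructor <;> linarith)
    have hg : Integrable (fun ω => (n.factorial : ℝ) * (4 / ε) ^ n *
        (Real.exp ((t + ε / 4) * X ω) + Real.exp ((t - ε / 4) * X ω))) P :=
      (h1.add h2).const_mul _
    refine hg.mono' (hmeas n t) (ae_of_all _ fun ω => ?_)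
    set x := X ω with hxdef
    have hb1 : |x| ^ n ≤ (n.factorial : ℝ) * (4 / ε) ^ n * Real.exp (ε / 4 * |x|) := by
      have h := Real.pow_div_factorial_le_exp (x := ε / 4 * |x|) (by positivity) n
      rw [div_le_iff₀ (by positivity)] at h
      have hx : |x| ^ n = (ε / 4 * |x|) ^ n * (4 / ε) ^ n := by
        rw [← mul_pow]
        congr 1
        field_simp
      calc |x| ^ n = (ε / 4 * |x|) ^ n * (4 / ε) ^ n := hx
        _ ≤ Real.exp (ε / 4 * |x|) * (n.factorial : ℝ) * (4 / ε) ^ n :=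
            mul_le_mul_of_nonneg_right h (by positivity)
        _ = (n.factorial : ℝ) * (4 / ε) ^ n * Real.exp (ε / 4 * |x|) := by ring
    have hb2 : Real.exp (ε / 4 * |x|) * Real.exp (t * x)
        ≤ Real.exp ((t + ε / 4) * x) + Real.exp ((t - ε / 4) * x) := by
      rw [← Real.exp_add]
      rcases le_or_gt 0 x with hx0 | hx0
      · rw [abs_of_nonneg hx0, show ε / 4 * x + t * x = (t + ε / 4) * x by ring]
        exact le_add_of_nonneg_right (Real.exp_pos _).le
      · rw [abs_of_neg hx0, show ε / 4 * -x + t * x = (t - ε / 4) * x by ring]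
        exact le_add_of_nonneg_left (Real.exp_pos _).le
    calc ‖x ^ n * Real.exp (t * x)‖ = |x| ^ n * Real.exp (t * x) := by
          rw [norm_mul, Real.norm_eq_abs, Real.norm_eq_abs, abs_pow,
            abs_of_pos (Real.exp_pos _)]
      _ ≤ (n.factorial : ℝ) * (4 / ε) ^ n * Real.exp (ε / 4 * |x|) * Real.exp (t * x) :=
          mul_le_mul_of_nonneg_right hb1 (Real.exp_pos _).le
      _ = (n.factorial : ℝ) * (4 / ε) ^ n * (Real.exp (ε / 4 * |x|) * Real.exp (t * x)) := by
          ring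
      _ ≤ _ := mul_le_mul_of_nonneg_left hb2 (by positivity)
  -- Step B : differentiation under the integral sign
  have key_deriv : ∀ (n : ℕ) (t : ℝ), |t| < ε / 2 → HasDerivAt (Mn n) (Mn (n + 1) t) t := by
    intro n t ht
    set δ : ℝ := (ε / 2 - |t|) / 2 with hδdef
    have hδ : 0 < δ := by rw [hδdef]; linarith
    have hb1 : |t + δ| < ε / 2 := by
      refine lt_of_le_of_lt (abs_add_le t δ) ?_
      rw [abs_of_pos hδ, hδdef]; linarith
    have hb2 : |t - δ| < ε / 2 := by
      refine lt_of_le_of_lt ?_ (show |t| + δ < ε / 2 by rw [hδdef]; linarith)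
      calc |t - δ| = |t + -δ| := by rw [sub_eq_add_neg]
        _ ≤ |t| + |-δ| := abs_add_le _ _
        _ = |t| + δ := by rw [abs_neg, abs_of_pos hδ]
    have i1 : Integrable (fun ω => |X ω| ^ (n + 1) * Real.exp ((t + δ) * X ω)) P := by
      refine (key_int (n + 1) (t + δ) hb1).abs.congr (ae_of_all _ fun ω => ?_)
      simp only []
      rw [abs_mul, abs_pow, abs_of_pos (Real.exp_pos _)]
    have i2 : Integrable (fun ω => |X ω| ^ (n + 1) * Real.exp ((t - δ) * X ω)) P := by
      refine (key_int (n + 1) (t - δ) hb2).abs.congr (ae_of_all _ fun ω => ?_)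
      simp only []
      rw [abs_mul, abs_pow, abs_of_pos (Real.exp_pos _)]
    have hbound : Integrable (fun ω => |X ω| ^ (n + 1) *
        (Real.exp ((t + δ) * X ω) + Real.exp ((t - δ) * X ω))) P :=
      (i1.add i2).congr (ae_of_all _ fun ω => (mul_add _ _ _).symm)
    have H := hasDerivAt_integral_of_dominated_loc_of_deriv_le
      (F := fun u ω => X ω ^ n * Real.exp (u * X ω))
      (F' := fun u ω => X ω ^ (n + 1) * Real.exp (u * X ω))
      (bound := fun ω => |X ω| ^ (n + 1) *
        (Real.exp ((t + δ) * X ω) + Real.exp ((t - δ) * X ω)))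
      (Metric.ball_mem_nhds t hδ) (Eventually.of_forall fun u => hmeas n u) (key_int n t ht)
      (hmeas (n + 1) t)
      (ae_of_all _ fun ω u hu => ?_) hbound
      (ae_of_all _ fun ω u hu => ?_)
    · exact H.2
    · -- bound
      rw [norm_mul, Real.norm_eq_abs, Real.norm_eq_abs, abs_pow,
        abs_of_pos (Real.exp_pos _)]
      refine mul_le_mul_of_nonneg_left ?_ (by positivity)
      rw [Metric.mem_ball, Real.dist_eq, abs_lt] at hu
      exact exp_le_exp_add_exp (x := X ω) (by linarith [hu.1]) (by linarith [hu.2])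
    · -- differentiability in the parameter
      have h1 : HasDerivAt (fun u => Real.exp (u * X ω))
          (Real.exp (u * X ω) * X ω) u := (hasDerivAt_mul_const (X ω)).exp
      have h2 := h1.const_mul ((X ω) ^ n)
      convert h2 using 1
      show X ω ^ (n + 1) * Real.exp (u * X ω) = _
      rw [pow_succ]; ring
      rfl
  -- Step C : identification of iterated derivatives on the ball
  have hball : ∀ {r : ℝ} {t : ℝ}, t ∈ Metric.ball (0 : ℝ) r ↔ |t| < r := by
    intro r t; rw [Metric.mem_ball, Real.dist_eq, sub_zero]
  have hs_open : IsOpen (Metric.ball (0 : ℝ) (ε / 2)) := Metric.isOpen_ball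
  have hM_eq : ∀ (n : ℕ), ∀ t ∈ Metric.ball (0 : ℝ) (ε / 2), iteratedDeriv n (Mn 0) t = Mn n t := by
    intro n
    induction n with
    | zero => intro t _; rw [iteratedDeriv_zero]
    | succ n IH =>
      intro t ht
      rw [iteratedDeriv_succ]
      have hev : iteratedDeriv n (Mn 0) =ᶠ[𝓝 t] Mn n :=
        eventually_of_mem (hs_open.mem_nhds ht) IH
      rw [hev.deriv_eq]
      exact (key_deriv n t (hball.mp ht)).deriv
  have hM_cd : ContDiffOn ℝ ((⊤ : ℕ∞) : WithTop ℕ∞) (Mn 0) (Metric.ball (0 : ℝ) (ε / 2)) := by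
    apply contDiffOn_of_differentiableOn_deriv
    intro m _
    have hd : DifferentiableOn ℝ (Mn m) (Metric.ball 0 (ε / 2)) :=
      fun x hx => ((key_deriv m x (hball.mp hx)).differentiableAt).differentiableWithinAt
    refine hd.congr fun x hx => ?_
    rw [itdw_isOpen hs_open hx, hM_eq m x hx]
  have h0s : (0 : ℝ) ∈ Metric.ball (0 : ℝ) (ε / 2) := Metric.mem_ball_self (by linarith)
  have hM0 : Mn 0 0 = 1 := by
    rw [hMndef]
    simp
  have hcont : ContinuousAt (Mn 0) 0 :=
    (key_deriv 0 0 (by rw [abs_zero]; linarith)).continuousAt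
  have hposev : ∀ᶠ t in 𝓝 (0 : ℝ), 0 < Mn 0 t ∧ t ∈ Metric.ball (0 : ℝ) (ε / 2) := by
    refine Eventually.and ?_ (eventually_of_mem (hs_open.mem_nhds h0s) fun y hy => hy)
    have : Set.Ioi (0 : ℝ) ∈ 𝓝 (Mn 0 0) := by rw [hM0]; exact Ioi_mem_nhds one_pos
    exact hcont.eventually_mem this
  obtain ⟨r, hr_pos, hrball⟩ := Metric.eventually_nhds_iff_ball.mp hposev
  have hs'_open : IsOpen (Metric.ball (0 : ℝ) r) := Metric.isOpen_ball
  have hsub : Metric.ball (0 : ℝ) r ⊆ Metric.ball (0 : ℝ) (ε / 2) :=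
    fun y hy => (hrball y hy).2
  have hpos : ∀ y ∈ Metric.ball (0 : ℝ) r, 0 < Mn 0 y := fun y hy => (hrball y hy).1
  have h0s' : (0 : ℝ) ∈ Metric.ball (0 : ℝ) r := Metric.mem_ball_self hr_pos
  have hKM : K = fun t => Real.log (Mn 0 t) := by
    funext t
    rw [hKdef, hMndef]
    simp
  have hK_cd : ContDiffOn ℝ ((⊤ : ℕ∞) : WithTop ℕ∞) K (Metric.ball (0 : ℝ) r) := by
    rw [hKM]
    exact (hM_cd.mono hsub).log fun x hx => (hpos x hx).ne'
  have hEq : Set.EqOn (deriv (Mn 0)) (fun t => deriv K t * Mn 0 t) (Metric.ball (0 : ℝ) r) := by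
    intro t ht
    have ht2 : |t| < ε / 2 := hball.mp (hsub ht)
    have hlog : HasDerivAt K (Mn 1 t / Mn 0 t) t := by
      rw [hKM]
      exact (key_deriv 0 t ht2).log (hpos t ht).ne'
    show deriv (Mn 0) t = deriv K t * Mn 0 t
    rw [(key_deriv 0 t ht2).deriv, hlog.deriv, div_mul_cancel₀ _ (hpos t ht).ne']
  -- Conclusion
  intro m
  have hMn_int : ∀ (k : ℕ), Mn k 0 = ∫ ω, X ω ^ k ∂P := by
    intro k
    rw [hMndef]
    simp
  calc ∫ ω, X ω ^ (m + 1) ∂P = Mn (m + 1) 0 := (hMn_int (m + 1)).symm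
    _ = iteratedDeriv (m + 1) (Mn 0) 0 := (hM_eq (m + 1) 0 h0s).symm
    _ = iteratedDeriv m (deriv (Mn 0)) 0 := by rw [iteratedDeriv_succ']
    _ = iteratedDeriv m (fun t => deriv K t * Mn 0 t) 0 :=
        Filter.EventuallyEq.iteratedDeriv_eq m
          (eventually_of_mem (hs'_open.mem_nhds h0s') hEq)
    _ = ∑ i ∈ Finset.range (m + 1), (m.choose i : ℝ) * iteratedDeriv i (deriv K) 0 *
          iteratedDeriv (m - i) (Mn 0) 0 :=
        leibniz_iteratedDeriv hs'_open m (deriv K) (Mn 0)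
          (hK_cd.deriv_of_isOpen hs'_open (by norm_num)) (hM_cd.mono hsub) 0 h0s'
    _ = ∑ i ∈ Finset.range (m + 1), (m.choose i : ℝ) * κ (i + 1) * ∫ ω, X ω ^ (m - i) ∂P := by
        refine Finset.sum_congr rfl fun i hi => ?_
        rw [← iteratedDeriv_succ', ← hκ (i + 1), hM_eq (m - i) 0 h0s, hMn_int (m - i)]
end
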